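/- arXiv:1709.04278 — 2 statements merged into one kernel-verified Lean document; each statement's English description precedes it below -/
import Mathlib

section
/- Let R be a commutative ring, ι a type, and H = FreeGroup ι. For every injective R[H]-linear map u : M → N between left R[H]-modules, the induced R-linear map I_{R[H]} ⊗_{R[H]} M → I_{R[H]} ⊗_{R[H]} N, sending the class of x ⊗ₜ m to the class of x ⊗ₜ u(m), is injective. -/
/-!
STATEMENT 3: Let `R` be a commutative ring, `ι` a type, and `H = FreeGroup ι`. For every
injective `R[H]`-linear map `u : M → N` between left `R[H]`-modules, the induced
`R`-linear map `I_{R[H]} ⊗_{R[H]} M → I_{R[H]} ⊗_{R[H]} N`, sending the class of `x ⊗ₜ m`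
to the class of `x ⊗ₜ u m`, is injective.
-/
open scoped TensorProduct

/-- The augmentation `R[G] →ₐ[R] R` of the group ring `R[G] = MonoidAlgebra R G`. -/
noncomputable def augmentation (R : Type*) [CommRing R] (G : Type*) [Group G] :
    MonoidAlgebra R G →ₐ[R] R :=
  MonoidAlgebra.lift R R G 1

/-- The augmentation ideal `I_{R[G]}` of the group ring. -/
noncomputable def augIdeal (R : Type*) [CommRing R] (G : Type*) [Group G] :
    Ideal (MonoidAlgebra R G) :=
  RingHom.ker (augmentation R G).toRingHom

theorem mul_of_mem_augIdeal {R : Type*} [CommRing R] {G : Type*} [Group G]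
    (x : augIdeal R G) (g : G) :
    (x : MonoidAlgebra R G) * MonoidAlgebra.of R G g ∈ augIdeal R G := by
  have hx : augmentation R G (x : MonoidAlgebra R G) = 0 := x.2
  simp [augIdeal, RingHom.mem_ker, map_mul, hx]

theorem of_sub_one_mem_augIdeal (R : Type*) [CommRing R] {G : Type*} [Group G] (g : G) :
    MonoidAlgebra.of R G g - 1 ∈ augIdeal R G := by
  simp [augIdeal, RingHom.mem_ker, map_sub, augmentation]

section AugTensor

variable (R : Type*) [CommRing R] (H : Type*) [Group H]
variable (M : Type*) [AddCommGroup M] [Module R M]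
  [Module (MonoidAlgebra R H) M] [IsScalarTower R (MonoidAlgebra R H) M]

noncomputable local instance : AddCommGroup ((augIdeal R H) ⊗[R] M) :=
  @TensorProduct.addCommGroup R _ (augIdeal R H) M _ _ _ _

/-- The `R`-submodule of relations defining `I_{R[H]} ⊗_{R[H]} M` as a quotient of
`I_{R[H]} ⊗[R] M`: it is generated by the elements `(x * h) ⊗ₜ m - x ⊗ₜ (h • m)`. -/
noncomputable def augTensorRel : Submodule R ((augIdeal R H) ⊗[R] M) :=
  Submodule.span R
    {z | ∃ (x : augIdeal R H) (h : H) (m : M),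
      z = (⟨(x : MonoidAlgebra R H) * MonoidAlgebra.of R H h,
            mul_of_mem_augIdeal x h⟩ : augIdeal R H) ⊗ₜ[R] m
          - x ⊗ₜ[R] ((MonoidAlgebra.of R H h) • m)}

/-- The tensor product `I_{R[H]} ⊗_{R[H]} M` of the augmentation ideal with a left
`R[H]`-module `M`. -/
noncomputable def augTensor : Type _ :=
  ((augIdeal R H) ⊗[R] M) ⧸ augTensorRel R H M

noncomputable instance : AddCommGroup (augTensor R H M) :=
  inferInstanceAs (AddCommGroup (((augIdeal R H) ⊗[R] M) ⧸ augTensorRel R H M))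

noncomputable instance : Module R (augTensor R H M) :=
  inferInstanceAs (Module R (((augIdeal R H) ⊗[R] M) ⧸ augTensorRel R H M))

/-- The class of `x ⊗ₜ m` in `I_{R[H]} ⊗_{R[H]} M`. -/
noncomputable def augTensorMk (x : augIdeal R H) (m : M) : augTensor R H M :=
  Submodule.Quotient.mk (x ⊗ₜ[R] m)

end AugTensor


open MulOpposite

noncomputable section Fox

variable (R : Type*) [CommRing R] (ι : Type*)

/-- Auxiliary group for defining Fox derivatives. -/
@[ext] structure FoxAux (R : Type*) [CommRing R] (ι : Type*) where
  g : FreeGroup ι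
  d : ι →₀ MonoidAlgebra R (FreeGroup ι)

namespace FoxAux

variable {R ι}

instance : Mul (FoxAux R ι) :=
  ⟨fun p q => ⟨p.g * q.g, op (MonoidAlgebra.of R (FreeGroup ι) q.g) • p.d + q.d⟩⟩
instance : One (FoxAux R ι) := ⟨⟨1, 0⟩⟩
instance : Inv (FoxAux R ι) :=
  ⟨fun p => ⟨p.g⁻¹, -(op (MonoidAlgebra.of R (FreeGroup ι) p.g⁻¹) • p.d)⟩⟩

@[simp] theorem mul_g (p q : FoxAux R ι) : (p * q).g = p.g * q.g := rfl
@[simp] theorem mul_d (p q : FoxAux R ι) :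
    (p * q).d = op (MonoidAlgebra.of R (FreeGroup ι) q.g) • p.d + q.d := rfl
@[simp] theorem one_g : (1 : FoxAux R ι).g = 1 := rfl
@[simp] theorem one_d : (1 : FoxAux R ι).d = 0 := rfl
@[simp] theorem inv_g (p : FoxAux R ι) : (p⁻¹).g = p.g⁻¹ := rfl
@[simp] theorem inv_d (p : FoxAux R ι) :
    (p⁻¹).d = -(op (MonoidAlgebra.of R (FreeGroup ι) p.g⁻¹) • p.d) := rfl

instance : Group (FoxAux R ι) where
  mul_assoc p q r := by
    ext1
    · simp [mul_assoc]
    · simp [smul_add, ← mul_smul, ← op_mul, ← map_mul, add_assoc, mul_assoc]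
  one_mul p := by ext1 <;> simp
  mul_one p := by ext1 <;> simp [← MonoidAlgebra.one_def]
  inv_mul_cancel p := by
    ext1
    · simp
    · simp [smul_neg, ← mul_smul, ← op_mul, ← map_mul, ← MonoidAlgebra.one_def]

end FoxAux

/-- The group homomorphism recording Fox derivatives. -/
def foxHom : FreeGroup ι →* FoxAux R ι :=
  FreeGroup.lift fun i => ⟨FreeGroup.of i, Finsupp.single i 1⟩

theorem foxHom_g (g : FreeGroup ι) : (foxHom R ι g).g = g := by
  have : (MonoidHom.mk' (fun p : FoxAux R ι => p.g) (fun p q => rfl)).comp (foxHom R ι)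
      = MonoidHom.id (FreeGroup ι) := by
    apply FreeGroup.ext_hom
    intro a
    simp [foxHom]
  exact DFunLike.congr_fun this g

/-- The Fox derivative of a group element. -/
def fox (g : FreeGroup ι) : ι →₀ MonoidAlgebra R (FreeGroup ι) := (foxHom R ι g).d

@[simp] theorem fox_one : fox R ι (1 : FreeGroup ι) = 0 := by
  simp [fox, map_one]

theorem fox_mul (g h : FreeGroup ι) :
    fox R ι (g * h) = op (MonoidAlgebra.of R (FreeGroup ι) h) • fox R ι g + fox R ι h := by
  simp [fox, map_mul, foxHom_g]

@[simp] theorem fox_of (i : ι) : fox R ι (FreeGroup.of i) = Finsupp.single i 1 := by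
  simp [fox, foxHom]

theorem fox_inv (g : FreeGroup ι) :
    fox R ι g⁻¹ = -(op (MonoidAlgebra.of R (FreeGroup ι) g⁻¹) • fox R ι g) := by
  have h0 := fox_mul R ι g⁻¹ g
  rw [inv_mul_cancel, fox_one] at h0
  have h1 := congrArg (fun v => op (MonoidAlgebra.of R (FreeGroup ι) g⁻¹) • v) h0
  simp only [smul_add, ← mul_smul, ← op_mul, ← map_mul, mul_inv_cancel, map_one, op_one,
    one_smul, smul_zero] at h1
  exact eq_neg_of_add_eq_zero_left h1.symm

/-- Fox derivative as an `R`-linear map on the group ring. -/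
def foxD : MonoidAlgebra R (FreeGroup ι) →ₗ[R] (ι →₀ MonoidAlgebra R (FreeGroup ι)) :=
  (Finsupp.linearCombination R (fox R ι)).comp (MonoidAlgebra.coeffLinearEquiv R).toLinearMap

@[simp] theorem foxD_of (g : FreeGroup ι) :
    foxD R ι (MonoidAlgebra.of R (FreeGroup ι) g) = fox R ι g := by
  have : foxD R ι (MonoidAlgebra.single g 1) = (1 : R) • fox R ι g :=
    Finsupp.linearCombination_single (R := R) (v := fox R ι) 1 g
  simpa using this


/-- The summation map `v ↦ ∑ᵢ (gᵢ - 1) * vᵢ`. -/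
def foxS : (ι →₀ MonoidAlgebra R (FreeGroup ι)) →ₗ[R] MonoidAlgebra R (FreeGroup ι) :=
  Finsupp.lsum R fun i =>
    LinearMap.mulLeft R (MonoidAlgebra.of R (FreeGroup ι) (FreeGroup.of i) - 1)

@[simp] theorem foxS_single (i : ι) (a : MonoidAlgebra R (FreeGroup ι)) :
    foxS R ι (Finsupp.single i a)
      = (MonoidAlgebra.of R (FreeGroup ι) (FreeGroup.of i) - 1) * a := by
  simp [foxS]

theorem foxS_op_smul (c : MonoidAlgebra R (FreeGroup ι))
    (v : ι →₀ MonoidAlgebra R (FreeGroup ι)) :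
    foxS R ι (op c • v) = foxS R ι v * c := by
  induction v using Finsupp.induction_linear with
  | zero => simp
  | add f g hf hg => simp [smul_add, map_add, hf, hg, add_mul]
  | single i a =>
      rw [Finsupp.smul_single, op_smul_eq_mul, foxS_single, foxS_single, mul_assoc]

@[simp] theorem augmentation_of {G : Type*} [Group G] (g : G) :
    augmentation R G (MonoidAlgebra.of R G g) = 1 := by
  simp [augmentation]

theorem foxS_fox (g : FreeGroup ι) :
    foxS R ι (fox R ι g) = MonoidAlgebra.of R (FreeGroup ι) g - 1 := by
  induction g using FreeGroup.induction_on with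
  | C1 => rw [fox_one, map_zero, map_one, sub_self]
  | of i =>
      rw [fox_of, foxS_single, mul_one]
  | inv_of i ih =>
      rw [fox_inv, map_neg, foxS_op_smul, ih]
      rw [sub_mul, one_mul, ← map_mul, mul_inv_cancel, map_one, neg_sub]
  | mul g h ihg ihh =>
      rw [fox_mul, map_add, foxS_op_smul, ihg, ihh, map_mul, sub_mul, one_mul]
      abel

theorem foxS_foxD (x : MonoidAlgebra R (FreeGroup ι)) :
    foxS R ι (foxD R ι x) = x - augmentation R (FreeGroup ι) x • 1 := by
  induction x using MonoidAlgebra.induction_on with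
  | of g => rw [foxD_of, foxS_fox, augmentation_of, one_smul]
  | add f g hf hg => rw [map_add, map_add, hf, hg, map_add, add_smul]; abel
  | smul r f hf => rw [map_smul, map_smul, hf, map_smul, smul_sub, smul_assoc]

theorem augmentation_foxS (v : ι →₀ MonoidAlgebra R (FreeGroup ι)) :
    augmentation R (FreeGroup ι) (foxS R ι v) = 0 := by
  induction v using Finsupp.induction_linear with
  | zero => simp
  | add f g hf hg => simp [map_add, hf, hg]
  | single i a =>
      rw [foxS_single, map_mul, map_sub, map_one, augmentation_of, sub_self, zero_mul]

theorem foxD_mul_of (x : MonoidAlgebra R (FreeGroup ι)) (h : FreeGroup ι) :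
    foxD R ι (x * MonoidAlgebra.of R (FreeGroup ι) h)
      = op (MonoidAlgebra.of R (FreeGroup ι) h) • foxD R ι x
        + augmentation R (FreeGroup ι) x • fox R ι h := by
  induction x using MonoidAlgebra.induction_on with
  | of g => rw [← map_mul, foxD_of, foxD_of, fox_mul, augmentation_of, one_smul]
  | add f g hf hg => rw [add_mul, map_add, hf, hg, map_add, map_add, smul_add, add_smul]; abel
  | smul r f hf =>
      rw [smul_mul_assoc, map_smul, hf, map_smul, smul_add, smul_comm r, map_smul,
        smul_assoc]

theorem mem_augIdeal_mul (x : augIdeal R (FreeGroup ι)) (a : MonoidAlgebra R (FreeGroup ι)) :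
    (x : MonoidAlgebra R (FreeGroup ι)) * a ∈ augIdeal R (FreeGroup ι) := by
  have hx : augmentation R (FreeGroup ι) (x : MonoidAlgebra R (FreeGroup ι)) = 0 :=
    RingHom.mem_ker.mp x.2
  simp [augIdeal, RingHom.mem_ker, map_mul, hx]

/-- `foxS` corestricted to the augmentation ideal. -/
def foxSI : (ι →₀ MonoidAlgebra R (FreeGroup ι)) →ₗ[R] augIdeal R (FreeGroup ι) :=
  LinearMap.codRestrict ((augIdeal R (FreeGroup ι)).restrictScalars R) (foxS R ι)
    fun v => RingHom.mem_ker.mpr (augmentation_foxS R ι v)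

@[simp] theorem foxSI_coe (v : ι →₀ MonoidAlgebra R (FreeGroup ι)) :
    (foxSI R ι v : MonoidAlgebra R (FreeGroup ι)) = foxS R ι v := rfl

section Modules

variable (M : Type*) [AddCommGroup M] [Module R M]
  [Module (MonoidAlgebra R (FreeGroup ι)) M]
  [IsScalarTower R (MonoidAlgebra R (FreeGroup ι)) M]

noncomputable local instance : AddCommGroup ((augIdeal R (FreeGroup ι)) ⊗[R] M) :=
  @TensorProduct.addCommGroup R _ (augIdeal R (FreeGroup ι)) M _ _ _ _

theorem augTensorMk_add_left (x y : augIdeal R (FreeGroup ι)) (m : M) :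
    augTensorMk R (FreeGroup ι) M (x + y) m
      = augTensorMk R (FreeGroup ι) M x m + augTensorMk R (FreeGroup ι) M y m := by
  rw [augTensorMk, augTensorMk, augTensorMk, TensorProduct.add_tmul, Submodule.Quotient.mk_add]
  rfl

theorem augTensorMk_zero (m : M) : augTensorMk R (FreeGroup ι) M 0 m = 0 := by
  rw [augTensorMk, TensorProduct.zero_tmul, Submodule.Quotient.mk_zero]
  rfl

theorem smul_comm'' (r : R) (a : MonoidAlgebra R (FreeGroup ι)) (m : M) :
    a • r • m = r • (a • m) := by
  rw [← algebraMap_smul (MonoidAlgebra R (FreeGroup ι)) r m, ← mul_smul,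
    ← Algebra.commutes r a, mul_smul, algebraMap_smul]

/-- The action of the group ring as an `R`-bilinear map. -/
def actB : MonoidAlgebra R (FreeGroup ι) →ₗ[R] M →ₗ[R] M :=
  LinearMap.mk₂ R (fun a m => a • m) (fun a b m => add_smul a b m)
    (fun c a m => smul_assoc c a m) (fun a m n => smul_add a m n)
    (fun c a m => smul_comm'' R ι M c a m)

/-- The pairing `(ι →₀ R[H]) → M → (ι →₀ M)`. -/
def foxP : (ι →₀ MonoidAlgebra R (FreeGroup ι)) →ₗ[R] M →ₗ[R] (ι →₀ M) :=
  Finsupp.lsum R fun i => (actB R ι M).compr₂ (Finsupp.lsingle i)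

@[simp] theorem foxP_single (i : ι) (a : MonoidAlgebra R (FreeGroup ι)) (m : M) :
    foxP R ι M (Finsupp.single i a) m = Finsupp.single i (a • m) := by
  simp [foxP, actB]

theorem foxP_op_smul (c : MonoidAlgebra R (FreeGroup ι))
    (v : ι →₀ MonoidAlgebra R (FreeGroup ι)) (m : M) :
    foxP R ι M (op c • v) m = foxP R ι M v (c • m) := by
  induction v using Finsupp.induction_linear with
  | zero => simp
  | add f g hf hg => simp [smul_add, map_add, hf, hg]
  | single i a =>
      rw [Finsupp.smul_single, op_smul_eq_mul, foxP_single, foxP_single, mul_smul]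

/-- The map `I ⊗[R] M → (ι →₀ M)`, `x ⊗ m ↦ (∂ᵢx • m)ᵢ`. -/
def foxPhi0 : (augIdeal R (FreeGroup ι)) ⊗[R] M →ₗ[R] (ι →₀ M) :=
  TensorProduct.lift ((foxP R ι M).comp ((foxD R ι).comp
    (((augIdeal R (FreeGroup ι)).subtype).restrictScalars R)))

@[simp] theorem foxPhi0_tmul (x : augIdeal R (FreeGroup ι)) (m : M) :
    foxPhi0 R ι M (x ⊗ₜ[R] m) = foxP R ι M (foxD R ι (x : MonoidAlgebra R (FreeGroup ι))) m :=
  rfl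

theorem augTensorRel_le_ker :
    augTensorRel R (FreeGroup ι) M ≤ LinearMap.ker (foxPhi0 R ι M) := by
  rw [augTensorRel, Submodule.span_le]
  rintro z ⟨x, h, m, rfl⟩
  have hx : augmentation R (FreeGroup ι) (x : MonoidAlgebra R (FreeGroup ι)) = 0 :=
    RingHom.mem_ker.mp x.2
  simp only [SetLike.mem_coe, LinearMap.mem_ker, map_sub, foxPhi0_tmul]
  rw [foxD_mul_of, hx, zero_smul, add_zero, foxP_op_smul, sub_self]

/-- The map `I ⊗_{R[H]} M → (ι →₀ M)`. -/
def foxPhi : augTensor R (FreeGroup ι) M →ₗ[R] (ι →₀ M) :=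
  Submodule.liftQ (augTensorRel R (FreeGroup ι) M) (foxPhi0 R ι M) (augTensorRel_le_ker R ι M)

@[simp] theorem foxPhi_mk (x : augIdeal R (FreeGroup ι)) (m : M) :
    foxPhi R ι M (augTensorMk R (FreeGroup ι) M x m)
      = foxP R ι M (foxD R ι (x : MonoidAlgebra R (FreeGroup ι))) m := rfl

/-- The map `(ι →₀ M) → I ⊗_{R[H]} M`, `single i m ↦ (gᵢ - 1) ⊗ m`. -/
def foxPsi : (ι →₀ M) →ₗ[R] augTensor R (FreeGroup ι) M :=
  Finsupp.lsum R fun i =>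
    (augTensorRel R (FreeGroup ι) M).mkQ.comp
      ((TensorProduct.mk R (augIdeal R (FreeGroup ι)) M)
        ⟨MonoidAlgebra.of R (FreeGroup ι) (FreeGroup.of i) - 1,
          of_sub_one_mem_augIdeal R (FreeGroup.of i)⟩)

@[simp] theorem foxPsi_single (i : ι) (m : M) :
    foxPsi R ι M (Finsupp.single i m)
      = augTensorMk R (FreeGroup ι) M
          ⟨MonoidAlgebra.of R (FreeGroup ι) (FreeGroup.of i) - 1,
            of_sub_one_mem_augIdeal R (FreeGroup.of i)⟩ m := by
  simp [foxPsi, augTensorMk]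
  exact Finsupp.lsum_single _ _ _ _

theorem augTensorMk_mul (x : augIdeal R (FreeGroup ι)) (a : MonoidAlgebra R (FreeGroup ι))
    (m : M) :
    augTensorMk R (FreeGroup ι) M ⟨(x : MonoidAlgebra R (FreeGroup ι)) * a,
        mem_augIdeal_mul R ι x a⟩ m
      = augTensorMk R (FreeGroup ι) M x (a • m) := by
  -- reduce to `a = of h` by linearity
  let mulR : MonoidAlgebra R (FreeGroup ι) →ₗ[R] augIdeal R (FreeGroup ι) :=
    LinearMap.codRestrict ((augIdeal R (FreeGroup ι)).restrictScalars R)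
      (LinearMap.mulLeft R (x : MonoidAlgebra R (FreeGroup ι)))
      fun a => by
        simp only [LinearMap.mulLeft_apply, Submodule.restrictScalars_mem]
        exact RingHom.mem_ker.mpr (by rw [map_mul, RingHom.mem_ker.mp x.2, zero_mul])
  let L1 : MonoidAlgebra R (FreeGroup ι) →ₗ[R] augTensor R (FreeGroup ι) M :=
    (augTensorRel R (FreeGroup ι) M).mkQ.comp
      (((TensorProduct.mk R (augIdeal R (FreeGroup ι)) M).flip m).comp mulR)
  let L2 : MonoidAlgebra R (FreeGroup ι) →ₗ[R] augTensor R (FreeGroup ι) M :=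
    (augTensorRel R (FreeGroup ι) M).mkQ.comp
      ((TensorProduct.mk R (augIdeal R (FreeGroup ι)) M x).comp ((actB R ι M).flip m))
  have hL : L1 = L2 := by
    refine MonoidAlgebra.lhom_ext' fun h => LinearMap.ext fun r => ?_
    rw [LinearMap.comp_apply, LinearMap.comp_apply]
    have hsingle : (MonoidAlgebra.lsingle (R := R) h r : MonoidAlgebra R (FreeGroup ι))
        = r • MonoidAlgebra.of R (FreeGroup ι) h := by
      simp [MonoidAlgebra.of_apply, Finsupp.smul_single]
    rw [hsingle, map_smul, map_smul]
    congr 1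
    show Submodule.Quotient.mk _ = Submodule.Quotient.mk _
    rw [Submodule.Quotient.eq]
    apply Submodule.subset_span
    exact ⟨x, h, m, by rfl⟩
  exact DFunLike.congr_fun hL a

set_option maxHeartbeats 1000000 in
theorem foxPsi_foxP (v : ι →₀ MonoidAlgebra R (FreeGroup ι)) (m : M) :
    foxPsi R ι M (foxP R ι M v m) = augTensorMk R (FreeGroup ι) M (foxSI R ι v) m := by
  induction v using Finsupp.induction_linear with
  | zero =>
      simp only [map_zero, LinearMap.zero_apply]
      rw [augTensorMk_zero]
  | add f g hf hg =>
      rw [map_add, LinearMap.add_apply, map_add, hf, hg, map_add, augTensorMk_add_left]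
  | single i a =>
      rw [foxP_single, foxPsi_single]
      have : foxSI R ι (Finsupp.single i a)
          = ⟨(MonoidAlgebra.of R (FreeGroup ι) (FreeGroup.of i) - 1) * a,
              mem_augIdeal_mul R ι ⟨_, of_sub_one_mem_augIdeal R (FreeGroup.of i)⟩ a⟩ := by
        apply Subtype.ext
        simp
      rw [this]
      exact (augTensorMk_mul R ι M ⟨_, of_sub_one_mem_augIdeal R (FreeGroup.of i)⟩ a m).symm

theorem foxPsi_foxPhi (z : augTensor R (FreeGroup ι) M) :
    foxPsi R ι M (foxPhi R ι M z) = z := by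
  obtain ⟨t, rfl⟩ := Submodule.Quotient.mk_surjective _ z
  induction t using TensorProduct.induction_on with
  | zero =>
      show foxPsi R ι M (foxPhi R ι M 0) = 0
      rw [map_zero, map_zero]
  | tmul x m =>
      rw [show (Submodule.Quotient.mk (x ⊗ₜ[R] m) : augTensor R (FreeGroup ι) M)
        = augTensorMk R (FreeGroup ι) M x m from rfl]
      rw [foxPhi_mk, foxPsi_foxP]
      have hx : augmentation R (FreeGroup ι) (x : MonoidAlgebra R (FreeGroup ι)) = 0 :=
        RingHom.mem_ker.mp x.2
      congr 1
      apply Subtype.ext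
      rw [foxSI_coe, foxS_foxD, hx, zero_smul, sub_zero]
  | add s t hs ht =>
      rw [Submodule.Quotient.mk_add]
      exact (congrArg (foxPsi R ι M) ((foxPhi R ι M).map_add _ _)).trans
        (((foxPsi R ι M).map_add _ _).trans (congrArg₂ (· + ·) hs ht))

end Modules

end Fox

theorem augTensor_map_injective_of_injective
    (R : Type*) [CommRing R] (ι : Type*)
    (M : Type*) [AddCommGroup M] [Module R M]
    [Module (MonoidAlgebra R (FreeGroup ι)) M]
    [IsScalarTower R (MonoidAlgebra R (FreeGroup ι)) M]
    (N : Type*) [AddCommGroup N] [Module R N]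
    [Module (MonoidAlgebra R (FreeGroup ι)) N]
    [IsScalarTower R (MonoidAlgebra R (FreeGroup ι)) N]
    (u : M →ₗ[MonoidAlgebra R (FreeGroup ι)] N) (hu : Function.Injective u)
    (T : augTensor R (FreeGroup ι) M →ₗ[R] augTensor R (FreeGroup ι) N)
    (hT : ∀ (x : augIdeal R (FreeGroup ι)) (m : M),
      T (augTensorMk R (FreeGroup ι) M x m) = augTensorMk R (FreeGroup ι) N x (u m)) :
    Function.Injective T := by
  have comm : ∀ z, foxPhi R ι N (T z)
      = Finsupp.mapRange.linearMap (u.restrictScalars R) (foxPhi R ι M z) := by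
    intro z
    obtain ⟨t, rfl⟩ := Submodule.Quotient.mk_surjective _ z
    induction t using TensorProduct.induction_on with
    | zero =>
        rw [Submodule.Quotient.mk_zero]
        change foxPhi R ι N (T 0) = Finsupp.mapRange.linearMap (u.restrictScalars R)
          (foxPhi R ι M 0)
        rw [map_zero, map_zero, map_zero, map_zero]
    | tmul x m =>
        rw [show (Submodule.Quotient.mk (x ⊗ₜ[R] m) : augTensor R (FreeGroup ι) M)
          = augTensorMk R (FreeGroup ι) M x m from rfl, hT, foxPhi_mk, foxPhi_mk]
        generalize foxD R ι (x : MonoidAlgebra R (FreeGroup ι)) = v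
        induction v using Finsupp.induction_linear with
        | zero => simp
        | add f g hf hg => simp only [map_add, LinearMap.add_apply, hf, hg]
        | single i a =>
            rw [foxP_single, foxP_single, Finsupp.mapRange.linearMap_apply,
              Finsupp.mapRange_single]
            rw [LinearMap.coe_restrictScalars, ← u.map_smul a m]
    | add s t hs ht =>
        rw [Submodule.Quotient.mk_add]
        exact ((congrArg (foxPhi R ι N) (T.map_add _ _)).trans ((foxPhi R ι N).map_add _ _)).trans
          ((congrArg₂ (· + ·) hs ht).trans ((LinearMap.map_add _ _ _).symm.trans
            (congrArg _ ((foxPhi R ι M).map_add _ _).symm)))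
  intro z w hzw
  have h1 : foxPhi R ι M z = foxPhi R ι M w := by
    have h2 := comm z
    rw [hzw, comm w] at h2
    rw [Finsupp.mapRange.linearMap_apply, Finsupp.mapRange.linearMap_apply] at h2
    exact (Finsupp.mapRange_injective (⇑(u.restrictScalars R)) (map_zero _)
      (by simpa using hu) h2).symm
  rw [← foxPsi_foxPhi R ι M z, ← foxPsi_foxPhi R ι M w, h1]
end

section
/- Let R be a commutative ring and let A and B be groups. In the group ring R[A ∗ B], let J_A be the left ideal generated by the elements inl(a) − 1 for a ∈ A, and let J_B be the left ideal generated by the elements inr(b) − 1 for b ∈ B. Then J_A ⊓ J_B = 0 and J_A ⊔ J_B = I_{R[A ∗ B]}; that is, the augmentation ideal of R[A ∗ B] is the internal direct sum of J_A and J_B as left R[A ∗ B]-modules. -/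
/-!
STATEMENT 4: Let `R` be a commutative ring and `A`, `B` groups. In the group ring
`R[A ∗ B]`, let `J_A` be the left ideal generated by the elements `inl a - 1` for `a ∈ A`
and `J_B` the left ideal generated by the elements `inr b - 1` for `b ∈ B`. Then
`J_A ⊓ J_B = 0` and `J_A ⊔ J_B = I_{R[A ∗ B]}`: the augmentation ideal of `R[A ∗ B]` is
the internal direct sum of `J_A` and `J_B` as left `R[A ∗ B]`-modules.
-/

open scoped Monoid.Coprod

section Aux
variable (R : Type*) [CommRing R] (A B : Type*) [Group A] [Group B]

/-- Auxiliary monoid `(R[A∗B] × R[A∗B]) ⋊ (A∗B)` used to build a derivation. -/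
def AuxP := (MonoidAlgebra R (A ∗ B) × MonoidAlgebra R (A ∗ B)) × (A ∗ B)

noncomputable instance : Mul (AuxP R A B) :=
  ⟨fun x y => ((x.1.1 + MonoidAlgebra.of R (A ∗ B) x.2 * y.1.1,
               x.1.2 + MonoidAlgebra.of R (A ∗ B) x.2 * y.1.2), x.2 * y.2)⟩

noncomputable instance : One (AuxP R A B) := ⟨((0, 0), 1)⟩

variable {R A B}

lemma AuxP.mul_def (x y : AuxP R A B) :
    x * y = ((x.1.1 + MonoidAlgebra.of R (A ∗ B) x.2 * y.1.1,
               x.1.2 + MonoidAlgebra.of R (A ∗ B) x.2 * y.1.2), x.2 * y.2) := rfl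

lemma AuxP.one_def : (1 : AuxP R A B) = ((0, 0), 1) := rfl

lemma AuxP.mul_assoc' (x y z : AuxP R A B) : x * y * z = x * (y * z) := by
  refine (AuxP.mul_def _ _).trans (Eq.trans ?_ (AuxP.mul_def _ _).symm)
  simp only [AuxP.mul_def, map_mul]
  exact Prod.ext (Prod.ext (by noncomm_ring) (by noncomm_ring)) (mul_assoc _ _ _)

lemma AuxP.one_mul' (x : AuxP R A B) : (1 : AuxP R A B) * x = x := by
  refine (AuxP.mul_def _ _).trans ?_
  simp [AuxP.one_def, ← MonoidAlgebra.one_def]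
  rfl

lemma AuxP.mul_one' (x : AuxP R A B) : x * (1 : AuxP R A B) = x := by
  refine (AuxP.mul_def _ _).trans ?_
  simp [AuxP.one_def]
  rfl

noncomputable instance : Monoid (AuxP R A B) where
  mul_assoc x y z := AuxP.mul_assoc' x y z
  one_mul x := AuxP.one_mul' x
  mul_one x := AuxP.mul_one' x

variable (R A B)

/-- The map `a ↦ ((inl a - 1, 0), inl a)` as a monoid hom. -/
noncomputable def auxFA : A →* AuxP R A B where
  toFun a := ((MonoidAlgebra.of R (A ∗ B) (Monoid.Coprod.inl a) - 1, 0), Monoid.Coprod.inl a)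
  map_one' := by simp [AuxP.one_def, ← MonoidAlgebra.one_def]; rfl
  map_mul' a a' := by
    refine Eq.trans ?_ (AuxP.mul_def _ _).symm
    simp only [map_mul]
    refine Prod.ext (Prod.ext ?_ (by simp)) rfl
    noncomm_ring

/-- The map `b ↦ ((0, inr b - 1), inr b)` as a monoid hom. -/
noncomputable def auxFB : B →* AuxP R A B where
  toFun b := ((0, MonoidAlgebra.of R (A ∗ B) (Monoid.Coprod.inr b) - 1), Monoid.Coprod.inr b)
  map_one' := by simp [AuxP.one_def, ← MonoidAlgebra.one_def]; rfl
  map_mul' b b' := by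
    refine Eq.trans ?_ (AuxP.mul_def _ _).symm
    simp only [map_mul]
    refine Prod.ext (Prod.ext (by simp) ?_) rfl
    noncomm_ring

/-- The derivation-with-tautological-part `A ∗ B →* AuxP`. -/
noncomputable def auxPhi : (A ∗ B) →* AuxP R A B :=
  Monoid.Coprod.lift (auxFA R A B) (auxFB R A B)

lemma auxPhi_snd (g : A ∗ B) : (auxPhi R A B g).2 = g := by
  have : (MonoidHom.mk' (fun x : AuxP R A B => x.2) (fun _ _ => rfl)).comp (auxPhi R A B)
      = MonoidHom.id (A ∗ B) := by
    apply Monoid.Coprod.hom_ext <;> ext x <;> rfl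
  exact DFunLike.congr_fun this g

/-- The Fox-derivative pair `d g = (d_A g, d_B g)`. -/
noncomputable def auxD (g : A ∗ B) :
    MonoidAlgebra R (A ∗ B) × MonoidAlgebra R (A ∗ B) :=
  (auxPhi R A B g).1

lemma auxD_inl (a : A) :
    auxD R A B (Monoid.Coprod.inl a)
      = (MonoidAlgebra.of R (A ∗ B) (Monoid.Coprod.inl a) - 1, 0) := by
  simp [auxD, auxPhi, auxFA]; rfl

lemma auxD_inr (b : B) :
    auxD R A B (Monoid.Coprod.inr b)
      = (0, MonoidAlgebra.of R (A ∗ B) (Monoid.Coprod.inr b) - 1) := by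
  simp [auxD, auxPhi, auxFB]; rfl

lemma auxD_mul (g h : A ∗ B) :
    auxD R A B (g * h) = auxD R A B g + MonoidAlgebra.of R (A ∗ B) g • auxD R A B h := by
  show (auxPhi R A B (g*h)).1 = _
  rw [map_mul, AuxP.mul_def]
  rw [show (auxPhi R A B g).2 = g from auxPhi_snd R A B g]
  rfl

/-- The `R`-linear extension of `auxD` to the group ring. -/
noncomputable def auxDL : MonoidAlgebra R (A ∗ B) →ₗ[R]
    MonoidAlgebra R (A ∗ B) × MonoidAlgebra R (A ∗ B) :=
  Finsupp.linearCombination R (auxD R A B) ∘ₗ (MonoidAlgebra.coeffLinearEquiv R).toLinearMap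

lemma auxDL_of (g : A ∗ B) :
    auxDL R A B (MonoidAlgebra.of R (A ∗ B) g) = auxD R A B g := by
  show Finsupp.linearCombination R (auxD R A B) (Finsupp.single g 1) = _
  rw [Finsupp.linearCombination_single, one_smul]

/-- Product rule against a group element. -/
lemma auxDL_mul_of (x : MonoidAlgebra R (A ∗ B)) (g : A ∗ B) :
    auxDL R A B (x * MonoidAlgebra.of R (A ∗ B) g)
      = x • auxD R A B g + auxDL R A B x := by
  induction x using MonoidAlgebra.induction_on with
  | of h =>
    rw [← map_mul, auxDL_of, auxDL_of, auxD_mul]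
    exact add_comm _ _
  | add f f' hf hf' =>
    rw [add_mul, map_add, hf, hf', map_add, add_smul]
    abel
  | smul r f hf =>
    rw [smul_mul_assoc, map_smul, hf, map_smul, smul_add, smul_assoc]

lemma aug_of (g : A ∗ B) : augmentation R (A ∗ B) (MonoidAlgebra.of R (A ∗ B) g) = 1 := by
  simp [augmentation, MonoidAlgebra.lift_of]

lemma auxDL_genA (x : MonoidAlgebra R (A ∗ B)) (a : A) :
    auxDL R A B (x * (MonoidAlgebra.of R (A ∗ B) (Monoid.Coprod.inl a) - 1))
      = (x * (MonoidAlgebra.of R (A ∗ B) (Monoid.Coprod.inl a) - 1), 0) := by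
  rw [mul_sub, mul_one, map_sub, auxDL_mul_of, auxD_inl]
  simp [Prod.smul_def, smul_eq_mul, mul_sub]

lemma auxDL_genB (x : MonoidAlgebra R (A ∗ B)) (b : B) :
    auxDL R A B (x * (MonoidAlgebra.of R (A ∗ B) (Monoid.Coprod.inr b) - 1))
      = (0, x * (MonoidAlgebra.of R (A ∗ B) (Monoid.Coprod.inr b) - 1)) := by
  rw [mul_sub, mul_one, map_sub, auxDL_mul_of, auxD_inr]
  simp [Prod.smul_def, smul_eq_mul, mul_sub]

/-- Sum of the two components of `d g` is `g - 1`. -/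
lemma auxD_sum (g : A ∗ B) :
    (auxD R A B g).1 + (auxD R A B g).2 = MonoidAlgebra.of R (A ∗ B) g - 1 := by
  induction g using Monoid.Coprod.induction_on with
  | inl a => rw [auxD_inl]; simp
  | inr b => rw [auxD_inr]; simp
  | mul g h hg hh =>
    rw [auxD_mul]
    simp only [Prod.fst_add, Prod.snd_add, Prod.smul_fst, Prod.smul_snd, smul_eq_mul]
    rw [add_add_add_comm, hg, ← mul_add, hh, mul_sub, mul_one, map_mul]
    abel

lemma auxDL_sum (x : MonoidAlgebra R (A ∗ B)) :
    (auxDL R A B x).1 + (auxDL R A B x).2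
      = x - algebraMap R (MonoidAlgebra R (A ∗ B)) (augmentation R (A ∗ B) x) := by
  induction x using MonoidAlgebra.induction_on with
  | of g => rw [auxDL_of, auxD_sum, aug_of, map_one]
  | add f f' hf hf' =>
    rw [map_add, map_add, map_add, Prod.fst_add, Prod.snd_add, add_add_add_comm, hf, hf']
    abel
  | smul r f hf =>
    rw [map_smul, map_smul, Prod.smul_fst, Prod.smul_snd, ← smul_add, hf, smul_sub,
      smul_eq_mul, map_mul]
    simp [Algebra.smul_def]

lemma auxD_fst_mem (g : A ∗ B) :
    (auxD R A B g).1 ∈ Ideal.span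
      {x : MonoidAlgebra R (A ∗ B) |
        ∃ a : A, x = MonoidAlgebra.of R (A ∗ B) (Monoid.Coprod.inl a) - 1} := by
  induction g using Monoid.Coprod.induction_on with
  | inl a => rw [auxD_inl]; exact Ideal.subset_span ⟨a, rfl⟩
  | inr b => rw [auxD_inr]; exact Submodule.zero_mem _
  | mul g h hg hh =>
    rw [auxD_mul, Prod.fst_add, Prod.smul_fst, smul_eq_mul]
    exact Ideal.add_mem _ hg (Ideal.mul_mem_left _ _ hh)

lemma auxD_snd_mem (g : A ∗ B) :
    (auxD R A B g).2 ∈ Ideal.span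
      {x : MonoidAlgebra R (A ∗ B) |
        ∃ b : B, x = MonoidAlgebra.of R (A ∗ B) (Monoid.Coprod.inr b) - 1} := by
  induction g using Monoid.Coprod.induction_on with
  | inl a => rw [auxD_inl]; exact Submodule.zero_mem _
  | inr b => rw [auxD_inr]; exact Ideal.subset_span ⟨b, rfl⟩
  | mul g h hg hh =>
    rw [auxD_mul, Prod.snd_add, Prod.smul_snd, smul_eq_mul]
    exact Ideal.add_mem _ hg (Ideal.mul_mem_left _ _ hh)

end Aux

theorem augIdeal_coprod_isInternalDirectSum
    (R : Type*) [CommRing R] (A B : Type*) [Group A] [Group B]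
    (JA JB : Ideal (MonoidAlgebra R (A ∗ B)))
    (hJA : JA = Ideal.span
      {x | ∃ a : A, x = MonoidAlgebra.of R (A ∗ B) (Monoid.Coprod.inl a) - 1})
    (hJB : JB = Ideal.span
      {x | ∃ b : B, x = MonoidAlgebra.of R (A ∗ B) (Monoid.Coprod.inr b) - 1}) :
    JA ⊓ JB = ⊥ ∧ JA ⊔ JB = augIdeal R (A ∗ B) := by
  have augA : ∀ a : A,
      augmentation R (A ∗ B) (MonoidAlgebra.of R (A ∗ B) (Monoid.Coprod.inl a) - 1) = 0 := by
    intro a; rw [map_sub, aug_of, map_one, sub_self]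
  have augB : ∀ b : B,
      augmentation R (A ∗ B) (MonoidAlgebra.of R (A ∗ B) (Monoid.Coprod.inr b) - 1) = 0 := by
    intro b; rw [map_sub, aug_of, map_one, sub_self]
  -- the retraction identities on the two ideals
  have hA : ∀ j ∈ JA, auxDL R A B j = (j, 0) := by
    intro j hj
    rw [hJA] at hj
    obtain ⟨c, hc, rfl⟩ := Submodule.mem_span_set.mp hj
    rw [map_finsuppSum, Finsupp.sum, Finsupp.sum]
    refine Prod.ext ?_ ?_
    · rw [Prod.fst_sum]
      refine Finset.sum_congr rfl fun s hs => ?_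
      obtain ⟨a, rfl⟩ := hc hs
      rw [smul_eq_mul, auxDL_genA]
    · rw [Prod.snd_sum]
      refine Finset.sum_eq_zero fun s hs => ?_
      obtain ⟨a, rfl⟩ := hc hs
      rw [smul_eq_mul, auxDL_genA]
  have hB : ∀ j ∈ JB, auxDL R A B j = (0, j) := by
    intro j hj
    rw [hJB] at hj
    obtain ⟨c, hc, rfl⟩ := Submodule.mem_span_set.mp hj
    rw [map_finsuppSum, Finsupp.sum, Finsupp.sum]
    refine Prod.ext ?_ ?_
    · rw [Prod.fst_sum]
      refine Finset.sum_eq_zero fun s hs => ?_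
      obtain ⟨b, rfl⟩ := hc hs
      rw [smul_eq_mul, auxDL_genB]
    · rw [Prod.snd_sum]
      refine Finset.sum_congr rfl fun s hs => ?_
      obtain ⟨b, rfl⟩ := hc hs
      rw [smul_eq_mul, auxDL_genB]
  constructor
  · rw [eq_bot_iff]
    rintro j ⟨h1, h2⟩
    have e1 := hA j h1
    have e2 := hB j h2
    rw [e2] at e1
    simpa using (Prod.mk.injEq _ _ _ _).mp e1 |>.1.symm
  · apply le_antisymm
    · rw [sup_le_iff, hJA, hJB]
      constructor <;> rw [Ideal.span_le] <;> rintro x ⟨g, rfl⟩ <;>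
        simp only [SetLike.mem_coe, augIdeal, RingHom.mem_ker, AlgHom.toRingHom_eq_coe,
          RingHom.coe_coe]
      · exact augA g
      · exact augB g
    · intro x hx
      have hx0 : augmentation R (A ∗ B) x = 0 := hx
      have hsum := auxDL_sum R A B x
      rw [hx0, map_zero, sub_zero] at hsum
      have m1 : (auxDL R A B x).1 ∈ JA := by
        rw [hJA]
        rw [show auxDL R A B x = Finsupp.sum x.coeff fun g r => r • auxD R A B g from
          Finsupp.linearCombination_apply R x.coeff]
        rw [Finsupp.sum, Prod.fst_sum]
        refine Submodule.sum_mem _ fun g _ => ?_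
        rw [Prod.smul_fst]
        exact Submodule.smul_of_tower_mem _ _ (auxD_fst_mem R A B g)
      have m2 : (auxDL R A B x).2 ∈ JB := by
        rw [hJB]
        rw [show auxDL R A B x = Finsupp.sum x.coeff fun g r => r • auxD R A B g from
          Finsupp.linearCombination_apply R x.coeff]
        rw [Finsupp.sum, Prod.snd_sum]
        refine Submodule.sum_mem _ fun g _ => ?_
        rw [Prod.smul_snd]
        exact Submodule.smul_of_tower_mem _ _ (auxD_snd_mem R A B g)
      rw [← hsum]
      exact Submodule.add_mem_sup m1 m2
end
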